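/- For an ℝ-linear map D : A → A, let U_D : B → B be the 𝔸ᵣ-linear map with U_D(Σ_{i=0}^r fᵢxⁱ) = Σ_{i=0}^r fᵢxⁱ + D(f₀)xʳ. Then: (i) U_D is a unital ring homomorphism of B if and only if D is a derivation of A; (ii) for derivations D, D′ of A one has U_D ∘ U_{D′} = U_{D+D′}; (iii) a unital 𝔸ᵣ-linear ring endomorphism U of B satisfies U(b) − b ∈ xʳB for all b ∈ B if and only if U = U_D for a unique derivation D of A. Consequently the kernel of the reduction homomorphism 𝔘ᵣ → 𝔘ᵣ₋₁ is a copy of the vector fields 𝔛(M) with group structure given by addition (Lemma 'lem:ker' of the paper). -/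

import Mathlib

/- Setting: `M` is a smooth manifold and `A = C^∞(M, ℝ)` its commutative ℝ-algebra of
smooth real-valued functions.  For a fixed `r ≥ 1`, `B = A[x]/(x^{r+1}) ≅ A ⊗ 𝔸ᵣ` is
realized as `AdjoinRoot (X^(r+1) : Polynomial A)`, with `ιB : A →+* B` the inclusion of
constants and `xB` the class of `x`.  An ℝ-linear map `B → B` is `𝔸ᵣ`-linear iff it
commutes with multiplication by `xB`. -/

open scoped Manifold

noncomputable section

variable {E : Type*} [NormedAddCommGroup E] [NormedSpace ℝ E]
  {HM : Type*} [TopologicalSpace HM] {IM : ModelWithCorners ℝ E HM}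
  {M : Type*} [TopologicalSpace M] [ChartedSpace HM M]

/-- `A = C^∞(M, ℝ)`, the algebra of smooth real-valued functions on `M`. -/
local notation "A" => C^(⊤:ℕ∞)⟮IM, M; ℝ⟯

variable (r : ℕ)

/-- `B = A[x]/(x^{r+1})`. -/
local notation "B" => AdjoinRoot ((Polynomial.X : Polynomial A) ^ (r + 1))
/-- the inclusion `A → B`. -/
local notation "ιB" => AdjoinRoot.of ((Polynomial.X : Polynomial A) ^ (r + 1))
/-- the class `x ∈ B`. -/
local notation "xB" => AdjoinRoot.root ((Polynomial.X : Polynomial A) ^ (r + 1))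

open Polynomial AdjoinRoot Finset

section Aux
variable {R : Type*} [CommRing R] [Algebra ℝ R] (r : ℕ)

local notation "Bb" => AdjoinRoot ((Polynomial.X : Polynomial R) ^ (r + 1))
local notation "ι" => AdjoinRoot.of ((Polynomial.X : Polynomial R) ^ (r + 1))
local notation "xb" => AdjoinRoot.root ((Polynomial.X : Polynomial R) ^ (r + 1))

theorem monicXpow : ((Polynomial.X : Polynomial R) ^ (r + 1)).Monic :=
  Polynomial.monic_X_pow _

/-- the `i`-th coefficient, as an ℝ-linear map. -/
def cf (i : ℕ) : Bb →ₗ[ℝ] R :=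
  ((Polynomial.lcoeff R i) ∘ₗ (AdjoinRoot.modByMonicHom (monicXpow r))).restrictScalars ℝ

theorem cf_mk (i : ℕ) (hi : i ≤ r) (p : Polynomial R) :
    cf r i (AdjoinRoot.mk _ p) = p.coeff i := by
  have h := Polynomial.modByMonic_add_div p (X ^ (r+1))
  have : p.coeff i = (p %ₘ (X ^ (r+1))).coeff i + ((X:Polynomial R) ^ (r+1) * (p /ₘ (X ^ (r+1)))).coeff i := by
    rw [← Polynomial.coeff_add, h]
  rw [Polynomial.coeff_X_pow_mul'] at this
  simp only [show ¬ (r+1 ≤ i) by omega, if_false, add_zero] at this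
  simp [cf, AdjoinRoot.modByMonicHom_mk, this]

theorem xpow_zero : (xb) ^ (r + 1) = 0 := by
  rw [← AdjoinRoot.mk_X, ← map_pow, AdjoinRoot.mk_self]

theorem repr_sum (b : Bb) :
    b = ∑ i ∈ Finset.range (r + 1), ι (cf r i b) * xb ^ i := by
  rcases subsingleton_or_nontrivial R with hR | hR
  · haveI : Subsingleton Bb := (AdjoinRoot.mk_surjective (g := ((X:Polynomial R)^(r+1) : Polynomial R))).subsingleton
    exact Subsingleton.elim _ _
  obtain ⟨p, rfl⟩ := AdjoinRoot.mk_surjective b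
  have hdeg : (p %ₘ (X ^ (r+1))).natDegree < r + 1 := by
    have := Polynomial.natDegree_modByMonic_lt p (monicXpow r) ?_
    · simpa using this
    · intro h
      have := congrArg Polynomial.natDegree h
      simp [Polynomial.natDegree_X_pow] at this
  have hmk : AdjoinRoot.mk ((X:Polynomial R)^(r+1)) p = AdjoinRoot.mk _ (p %ₘ (X ^ (r+1))) := by
    rw [AdjoinRoot.mk_eq_mk]
    exact ⟨p /ₘ (X ^ (r+1)), by rw [Polynomial.modByMonic_eq_sub_mul_div _ (X ^ (r+1))]; ring⟩
  conv_lhs => rw [hmk]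
  rw [← AdjoinRoot.aeval_eq, Polynomial.aeval_def,
    Polynomial.eval₂_eq_sum_range' _ hdeg, ← AdjoinRoot.algebraMap_eq]
  refine Finset.sum_congr rfl fun i hi => ?_
  rw [cf_mk r i (by simpa using Nat.lt_succ_iff.mp (Finset.mem_range.mp hi)) p]
  congr 1
  have h := Polynomial.modByMonic_add_div p (X ^ (r+1))
  have : p.coeff i = (p %ₘ (X ^ (r+1))).coeff i + ((X:Polynomial R) ^ (r+1) * (p /ₘ (X ^ (r+1)))).coeff i := by
    rw [← Polynomial.coeff_add, h]
  rw [Polynomial.coeff_X_pow_mul'] at this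
  have hi' : i < r + 1 := Finset.mem_range.mp hi
  simp only [show ¬ (r+1 ≤ i) by omega, if_false, add_zero] at this
  rw [this]

theorem cf_of_mul_xpow (i j : ℕ) (hj : j ≤ r) (f : R) :
    cf r i (ι f * xb ^ j) = if i = j then f else 0 := by
  have : ι f * xb ^ j = AdjoinRoot.mk _ (Polynomial.C f * X ^ j) := by
    rw [map_mul, AdjoinRoot.mk_C, map_pow, AdjoinRoot.mk_X]
  rcases le_or_gt i r with hi | hi
  · rw [this, cf_mk r i hi, Polynomial.coeff_C_mul, Polynomial.coeff_X_pow]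
    split <;> simp_all
  · have hij : i ≠ j := by omega
    rw [this, if_neg hij]
    nontriviality R
    simp only [cf, LinearMap.coe_restrictScalars, LinearMap.coe_comp, Function.comp_apply,
      AdjoinRoot.modByMonicHom_mk]
    have hself : (Polynomial.C f * X ^ j) %ₘ ((X:Polynomial R) ^ (r+1)) = Polynomial.C f * X ^ j := by
      rw [Polynomial.modByMonic_eq_self_iff (monicXpow r), Polynomial.degree_X_pow]
      exact lt_of_le_of_lt (Polynomial.degree_C_mul_X_pow_le j f) (by exact_mod_cast by omega)
    rw [hself]
    simp [Polynomial.coeff_C_mul, Polynomial.coeff_X_pow, hij]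


theorem cf_of (i : ℕ) (hi : i ≤ r) (f : R) :
    cf r i (ι f) = if i = 0 then f else 0 := by
  have := cf_of_mul_xpow r i 0 (by omega) f
  simpa using this

theorem xr_inj {f g : R} (h : ι f * xb ^ r = ι g * xb ^ r) : f = g := by
  have := congrArg (cf r r) h
  simpa [cf_of_mul_xpow r r r le_rfl] using this

theorem cf0_mul (b c : Bb) : cf r 0 (b * c) = cf r 0 b * cf r 0 c := by
  obtain ⟨p, rfl⟩ := AdjoinRoot.mk_surjective b
  obtain ⟨q, rfl⟩ := AdjoinRoot.mk_surjective c
  rw [← map_mul, cf_mk r 0 (by omega), cf_mk r 0 (by omega), cf_mk r 0 (by omega),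
    Polynomial.mul_coeff_zero]

theorem xpow_zero' (n : ℕ) (hn : r + 1 ≤ n) : (xb) ^ n = 0 := by
  obtain ⟨k, rfl⟩ := Nat.exists_eq_add_of_le hn
  calc (xb) ^ (r + 1 + k) = (xb) ^ (r + 1) * (xb) ^ k := pow_add _ _ _
    _ = 0 := by rw [xpow_zero, zero_mul]

theorem xr_mul (b : Bb) : xb ^ r * b = ι (cf r 0 b) * xb ^ r := by
  conv_lhs => rw [repr_sum r b]
  rw [Finset.mul_sum]
  rw [Finset.sum_eq_single_of_mem 0 (Finset.mem_range.mpr (by omega))]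
  · rw [pow_zero, mul_one, mul_comm]
  · intro i hi h0
    calc xb ^ r * (ι (cf r i b) * xb ^ i) = ι (cf r i b) * (xb ^ r * xb ^ i) := by ring
      _ = ι (cf r i b) * xb ^ (r + i) := by rw [pow_add xb r i]
      _ = 0 := by rw [xpow_zero' r (r + i) (by omega), mul_zero]

theorem formula (hr : 1 ≤ r) (D : R →ₗ[ℝ] R) (U : Bb →ₗ[ℝ] Bb)
    (hx : ∀ b : Bb, U (xb * b) = xb * U b)
    (hf : ∀ f : R, U (ι f) = ι f + ι (D f) * xb ^ r) (b : Bb) :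
    U b = b + ι (D (cf r 0 b)) * xb ^ r := by
  have hxp : ∀ n (c : Bb), U (xb ^ n * c) = xb ^ n * U c := by
    intro n
    induction n with
    | zero => simp
    | succ n ih =>
        intro c
        rw [pow_succ xb n, mul_comm (xb ^ n) xb, mul_assoc, hx, ih, ← mul_assoc,
          mul_comm xb (xb ^ n)]
  conv_lhs => rw [repr_sum r b]
  rw [map_sum]
  have hterm : ∀ i ∈ Finset.range (r + 1),
      U (ι (cf r i b) * xb ^ i)
        = ι (cf r i b) * xb ^ i + (if i = 0 then ι (D (cf r 0 b)) * xb ^ r else 0) := by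
    intro i _
    rw [mul_comm, hxp i, hf, mul_add]
    by_cases h0 : i = 0
    · subst h0; simp [mul_comm]
    · have hz : xb ^ i * (ι (D (cf r i b)) * xb ^ r) = 0 := by
        calc xb ^ i * (ι (D (cf r i b)) * xb ^ r) = ι (D (cf r i b)) * (xb ^ i * xb ^ r) := by
              ring
          _ = ι (D (cf r i b)) * xb ^ (i + r) := by rw [pow_add xb i r]
          _ = 0 := by rw [xpow_zero' r (i + r) (by omega), mul_zero]
      rw [hz, if_neg h0, add_zero, mul_comm]
  rw [Finset.sum_congr rfl hterm, Finset.sum_add_distrib, ← repr_sum r b,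
    Finset.sum_ite_eq' (Finset.range (r + 1)) 0 (fun _ => ι (D (cf r 0 b)) * xb ^ r),
    if_pos (Finset.mem_range.mpr (by omega))]

theorem x2r_zero (hr : 1 ≤ r) : (xb) ^ r * (xb) ^ r = 0 := by
  rw [← pow_add xb r r]
  exact xpow_zero' r (r + r) (by omega)

theorem part1 (hr : 1 ≤ r) (D : R →ₗ[ℝ] R) (U : Bb →ₗ[ℝ] Bb)
    (hx : ∀ b : Bb, U (xb * b) = xb * U b)
    (hf : ∀ f : R, U (ι f) = ι f + ι (D f) * xb ^ r) :
    (U 1 = 1 ∧ ∀ b c : Bb, U (b * c) = U b * U c) ↔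
      ∀ f g : R, D (f * g) = D f * g + f * D g := by
  constructor
  · rintro ⟨h1, hm⟩ f g
    have e : U (ι (f * g)) = U (ι f) * U (ι g) := by
      rw [show (ι (f * g) : Bb) = ι f * ι g from map_mul ι f g]; exact hm _ _
    rw [hf, hf, hf] at e
    have key : (ι f + ι (D f) * xb ^ r) * (ι g + ι (D g) * xb ^ r)
        = ι (f * g) + (ι (D f) * ι g + ι f * ι (D g)) * xb ^ r := by
      have h3 := x2r_zero (R := R) r hr
      rw [show (ι (f * g) : Bb) = ι f * ι g from map_mul ι f g]
      linear_combination (ι (D f) * ι (D g)) * h3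
    rw [key] at e
    have e2 : ι (D (f * g)) * xb ^ r = ι (D f * g + f * D g) * xb ^ r := by
      rw [show (ι (D f * g + f * D g) : Bb) = ι (D f) * ι g + ι f * ι (D g) by
        rw [map_add ι (D f * g) (f * D g), map_mul ι (D f) g, map_mul ι f (D g)]]
      exact add_left_cancel e
    exact xr_inj r e2
  · intro hD
    have hD1 : D 1 = 0 := by
      have h := hD 1 1
      simp only [mul_one, one_mul] at h
      exact (left_eq_add.mp h)
    constructor
    · have : (1 : Bb) = ι 1 := by rw [map_one]
      rw [this, hf, hD1, map_zero, zero_mul, add_zero]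
    · intro b c
      rw [formula r hr D U hx hf b, formula r hr D U hx hf c, formula r hr D U hx hf (b * c),
        cf0_mul, hD, map_add ι (D (cf r 0 b) * cf r 0 c) (cf r 0 b * D (cf r 0 c)),
        map_mul ι (D (cf r 0 b)) (cf r 0 c), map_mul ι (cf r 0 b) (D (cf r 0 c))]
      have h1 := xr_mul r b
      have h2 := xr_mul r c
      have h3 := x2r_zero (R := R) r hr
      linear_combination (-(ι (D (cf r 0 c)))) * h1 + (-(ι (D (cf r 0 b)))) * h2
        + (-(ι (D (cf r 0 b)) * ι (D (cf r 0 c)))) * h3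

theorem part2 (hr : 1 ≤ r) (D D' : R →ₗ[ℝ] R)
    (U U' U'' : Bb →ₗ[ℝ] Bb)
    (hx : ∀ b : Bb, U (xb * b) = xb * U b)
    (hf : ∀ f : R, U (ι f) = ι f + ι (D f) * xb ^ r)
    (hx' : ∀ b : Bb, U' (xb * b) = xb * U' b)
    (hf' : ∀ f : R, U' (ι f) = ι f + ι (D' f) * xb ^ r)
    (hx'' : ∀ b : Bb, U'' (xb * b) = xb * U'' b)
    (hf'' : ∀ f : R, U'' (ι f) = ι f + ι (D f + D' f) * xb ^ r) :
    U.comp U' = U'' := by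
  ext b
  rw [LinearMap.comp_apply, formula r hr D' U' hx' hf' b, map_add,
    formula r hr D U hx hf b,
    formula r hr D U hx hf (ι (D' (cf r 0 b)) * xb ^ r),
    formula r hr (D + D') U'' hx'' (fun f => by simpa using hf'' f) b]
  have hc : cf r 0 (ι (D' (cf r 0 b)) * xb ^ r) = 0 := by
    rw [cf_of_mul_xpow r 0 r le_rfl, if_neg (by omega)]
  rw [hc, map_zero, map_zero, zero_mul, add_zero]
  simp only [LinearMap.add_apply, map_add]
  ring

/-- `ι` as an ℝ-linear map. -/
def ιL : R →ₗ[ℝ] Bb := (Algebra.linearMap R Bb).restrictScalars ℝ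

theorem ιL_apply (f : R) : ιL r f = ι f := by
  simp [ιL, AdjoinRoot.algebraMap_eq]

theorem part3 (hr : 1 ≤ r) (U : Bb →ₗ[ℝ] Bb) (h1 : U 1 = 1)
    (hm : ∀ b c : Bb, U (b * c) = U b * U c)
    (hx : ∀ b : Bb, U (xb * b) = xb * U b) :
    ((∀ b : Bb, ∃ c : Bb, U b - b = xb ^ r * c) ↔
      (∃! D : R →ₗ[ℝ] R, (∀ f g : R, D (f * g) = D f * g + f * D g) ∧
        ∀ f : R, U (ι f) = ι f + ι (D f) * xb ^ r)) := by
  constructor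
  · intro h
    set D : R →ₗ[ℝ] R := (cf r r) ∘ₗ U ∘ₗ (ιL r) with hDdef
    have hf : ∀ f : R, U (ι f) = ι f + ι (D f) * xb ^ r := by
      intro f
      obtain ⟨c, hc⟩ := h (ι f)
      have hU : U (ι f) = ι f + ι (cf r 0 c) * xb ^ r := by
        rw [← xr_mul r c, ← hc]; ring
      have hDf : D f = cf r 0 c := by
        have hD0 : D f = cf r r (U (ι f)) := by
          simp only [hDdef, LinearMap.comp_apply, ιL_apply]
        rw [hD0, hU, map_add, cf_of r r le_rfl f, if_neg (by omega),
          cf_of_mul_xpow r r r le_rfl, if_pos rfl, zero_add]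
      rw [hU, hDf]
    refine ⟨D, ⟨(part1 r hr D U hx hf).mp ⟨h1, hm⟩, hf⟩, ?_⟩
    rintro D' ⟨_, hf'⟩
    ext f
    have e := (hf' f).symm.trans (hf f)
    exact xr_inj r (add_left_cancel e)
  · rintro ⟨D, ⟨hD, hf⟩, _⟩ b
    refine ⟨ι (D (cf r 0 b)), ?_⟩
    rw [formula r hr D U hx hf b, add_sub_cancel_left, mul_comm]

end Aux


/-- for an ℝ-linear map `D : A → A`, the map `U_D : B → B`,
`U_D(Σ fᵢxⁱ) = Σ fᵢxⁱ + D(f₀)xʳ`, is the unique `𝔸ᵣ`-linear (ℝ-linear, commuting with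
multiplication by `x`) map with `U_D(ιB f) = ιB f + ιB (D f) * x^r`; these properties are
taken as the characterization of `U_D` below.  Then: (i) `U_D` is a unital ring
homomorphism iff `D` is a derivation; (ii) for derivations `D, D'`,
`U_D ∘ U_{D'} = U_{D+D'}`; (iii) a unital `𝔸ᵣ`-linear ring endomorphism `U` of `B`
satisfies `U(b) − b ∈ xʳB` for all `b ∈ B` iff `U = U_D` for a unique derivation `D`
of `A`. -/
theorem kernel_of_reduction
    (hr : 1 ≤ r) :
    (∀ (D : A →ₗ[ℝ] A) (U : B →ₗ[ℝ] B),
        (∀ b : B, U (xB * b) = xB * U b) →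
        (∀ f : A, U (ιB f) = ιB f + ιB (D f) * xB ^ r) →
        ((U 1 = 1 ∧ ∀ b c : B, U (b * c) = U b * U c) ↔
          ∀ f g : A, D (f * g) = D f * g + f * D g)) ∧
    (∀ (D D' : A →ₗ[ℝ] A),
        (∀ f g : A, D (f * g) = D f * g + f * D g) →
        (∀ f g : A, D' (f * g) = D' f * g + f * D' g) →
        ∀ (U U' U'' : B →ₗ[ℝ] B),
        (∀ b : B, U (xB * b) = xB * U b) →
        (∀ f : A, U (ιB f) = ιB f + ιB (D f) * xB ^ r) →
        (∀ b : B, U' (xB * b) = xB * U' b) →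
        (∀ f : A, U' (ιB f) = ιB f + ιB (D' f) * xB ^ r) →
        (∀ b : B, U'' (xB * b) = xB * U'' b) →
        (∀ f : A, U'' (ιB f) = ιB f + ιB (D f + D' f) * xB ^ r) →
        U.comp U' = U'') ∧
    (∀ U : B →ₗ[ℝ] B,
        U 1 = 1 → (∀ b c : B, U (b * c) = U b * U c) →
        (∀ b : B, U (xB * b) = xB * U b) →
        ((∀ b : B, ∃ c : B, U b - b = xB ^ r * c) ↔
          (∃! D : A →ₗ[ℝ] A, (∀ f g : A, D (f * g) = D f * g + f * D g) ∧
            ∀ f : A, U (ιB f) = ιB f + ιB (D f) * xB ^ r))) := by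
  refine ⟨fun D U hx hf => part1 r hr D U hx hf,
    fun D D' _ _ U U' U'' hx hf hx' hf' hx'' hf'' =>
      part2 r hr D D' U U' U'' hx hf hx' hf' hx'' hf'',
    fun U h1 hm hx => part3 r hr U h1 hm hx⟩
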